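/- With φ, φ* as above and L̃₂(φ,ψ) := 2^{n−1} π₂(τ(φ⊗ψ)) where τ(φ⊗ψ)(ξ) = B(φ,ξ)ψ, one has for all spinors φ, ψ and all v ∈ V: (i) 2[L̃₂(φ,ψ), v] = (−1)^{n(n−1)/2} ψ*∘φ(v) − φ*∘ψ(v), and (ii) 2 B(φ,ψ) v = (−1)^{n(n−1)/2} ψ*∘φ(v) + φ*∘ψ(v), the bracket and action taken in the Clifford algebra. -/

import Mathlib

open CliffordAlgebra

set_option maxHeartbeats 1000000 in
theorem stmt15 {k V S : Type*} [Field k] [AddCommGroup V] [Module k V]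
    [FiniteDimensional k V] [AddCommGroup S] [Module k S] [FiniteDimensional k S]
    (n : ℕ)
    (g : LinearMap.BilinForm k V) (Q : QuadraticForm k V)
    (h2 : (2 : k) ≠ 0)
    (hsymm : ∀ v w, g v w = g w v)
    (hQ : ∀ v, Q v = g v v)
    -- an orthonormal basis of `V`
    (b : Module.Basis (Fin (2 * n)) k V)
    (horth : ∀ i j, i ≠ j → g (b i) (b j) = 0)
    (hunit : ∀ i, g (b i) (b i) = 1 ∨ g (b i) (b i) = -1)
    -- the spinor representation
    (hdimS : Module.finrank k S = 2 ^ n)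
    (ρ : CliffordAlgebra Q ≃ₐ[k] Module.End k S)
    -- a nonzero spinor norm with its symmetry
    (B : S →ₗ[k] S →ₗ[k] k) (hBne : B ≠ 0)
    (hB : ∀ (v : V) (φ ψ : S), B (ρ (ι Q v) φ) ψ = B φ (ρ (ι Q v) ψ))
    (hBsymm : ∀ φ ψ : S, B φ ψ = (-1 : k) ^ (n * (n - 1) / 2) * B ψ φ) :
    letI star : S → S → V := fun φ ψ =>
      ∑ i, (g (b i) (b i) * B φ (ρ (ι Q (b i)) ψ)) • b i
    letI L : S → S → CliffordAlgebra Q := fun φ ψ =>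
      (2 : k)⁻¹ • ∑ p ∈ Finset.univ.filter (fun p : Fin (2 * n) × Fin (2 * n) => p.1 < p.2),
        (g (b p.1) (b p.1) * g (b p.2) (b p.2) *
          B φ (ρ (ι Q (b p.2) * ι Q (b p.1)) ψ)) • (ι Q (b p.1) * ι Q (b p.2))
    -- (i) `2[L̃₂(φ,ψ), v] = (−1)^{n(n−1)/2} ψ*∘φ(v) − φ*∘ψ(v)`
    (∀ (φ ψ : S) (v : V),
      (2 : k) • (L φ ψ * ι Q v - ι Q v * L φ ψ) =
        ι Q ((-1 : k) ^ (n * (n - 1) / 2) • star ψ (ρ (ι Q v) φ)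
          - star φ (ρ (ι Q v) ψ))) ∧
    -- (ii) `2 B(φ,ψ) v = (−1)^{n(n−1)/2} ψ*∘φ(v) + φ*∘ψ(v)`
    (∀ (φ ψ : S) (v : V),
      (2 * B φ ψ) • v =
        (-1 : k) ^ (n * (n - 1) / 2) • star ψ (ρ (ι Q v) φ)
          + star φ (ρ (ι Q v) ψ)) := by
  -- abbreviations
  set σ : ℕ := n * (n - 1) / 2 with hσ
  -- polarization identity
  have hpolar : ∀ v w, ι Q v * ι Q w + ι Q w * ι Q v = algebraMap k _ (2 * g v w) := by
    intro v w
    rw [CliffordAlgebra.ι_mul_ι_add_swap]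
    congr 1
    simp [QuadraticMap.polar, hQ, map_add, hsymm w v]
    ring
  -- commutator of a product of two vectors with a vector
  have hcomm : ∀ u w v, (ι Q u * ι Q w) * ι Q v - ι Q v * (ι Q u * ι Q w)
      = (2 * g w v) • ι Q u - (2 * g u v) • ι Q w := by
    intro u w v
    have h1 : ι Q w * ι Q v = algebraMap k _ (2 * g w v) - ι Q v * ι Q w :=
      eq_sub_of_add_eq (hpolar w v)
    have h2 : ι Q u * ι Q v = algebraMap k _ (2 * g u v) - ι Q v * ι Q u :=
      eq_sub_of_add_eq (hpolar u v)
    rw [mul_assoc, h1, mul_sub, ← mul_assoc, h2, sub_mul, Algebra.smul_def, Algebra.smul_def,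
      ← Algebra.commutes]
    ring_nf
    rw [mul_assoc]
    abel
  -- squares of basis norms
  have hsq : ∀ i, g (b i) (b i) * g (b i) (b i) = 1 := by
    intro i; rcases hunit i with h | h <;> rw [h] <;> ring
  -- expansion of a vector in the orthonormal basis
  have hv : ∀ v, ∑ i, (g (b i) (b i) * g v (b i)) • b i = v := by
    have key : (∑ i, ((g (b i) (b i)) • (g.flip (b i))).smulRight (b i) : V →ₗ[k] V)
        = LinearMap.id := by
      apply b.ext
      intro j
      simp only [LinearMap.sum_apply, LinearMap.smulRight_apply, LinearMap.smul_apply,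
        LinearMap.flip_apply, LinearMap.id_apply, smul_eq_mul]
      rw [Finset.sum_eq_single j]
      · rw [show ((g.flip) (b j)) (b j) = g (b j) (b j) from rfl, hsq, one_smul]
      · intro i _ hij
        rw [show ((g.flip) (b i)) (b j) = g (b j) (b i) from rfl, horth j i (Ne.symm hij)]
        simp
      · simp
    intro v
    have h := LinearMap.congr_fun key v
    simp only [LinearMap.sum_apply, LinearMap.smulRight_apply, LinearMap.smul_apply,
      LinearMap.flip_apply, LinearMap.id_apply, smul_eq_mul] at h
    exact h
  -- representation of scalars
  have halg : ∀ (c : k) (ψ : S), ρ (algebraMap k _ c) ψ = c • ψ := by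
    intro c ψ; rw [AlgEquiv.commutes, Module.algebraMap_end_apply]
  have hend : ∀ (x y : CliffordAlgebra Q) (ψ : S), ρ (x * y) ψ = ρ x (ρ y ψ) := by
    intro x y ψ; rw [map_mul, Module.End.mul_apply]
  -- moving the sign through B
  have hmove : ∀ (φ ψ : S) (v : V) (i : Fin (2 * n)),
      (-1 : k) ^ σ * B ψ (ρ (ι Q (b i)) (ρ (ι Q v) φ))
        = B φ (ρ (ι Q v * ι Q (b i)) ψ) := by
    intro φ ψ v i
    rw [← hBsymm, hB (b i), hB v, hend]
  -- anticommutation of distinct basis vectors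
  have hanti : ∀ i j, i ≠ j → ι Q (b i) * ι Q (b j) = -(ι Q (b j) * ι Q (b i)) := by
    intro i j hij
    have h := hpolar (b i) (b j)
    rw [horth i j hij, mul_zero, map_zero] at h
    exact eq_neg_of_add_eq_zero_left h
  -- part (ii)
  have part2 : ∀ (φ ψ : S) (v : V),
      (2 * B φ ψ) • v =
        (-1 : k) ^ σ • ∑ i, (g (b i) (b i) * B ψ (ρ (ι Q (b i)) (ρ (ι Q v) φ))) • b i
          + ∑ i, (g (b i) (b i) * B φ (ρ (ι Q (b i)) (ρ (ι Q v) ψ))) • b i := by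
    intro φ ψ v
    rw [Finset.smul_sum, ← Finset.sum_add_distrib]
    have hterm : ∀ i ∈ Finset.univ, (-1 : k) ^ σ • ((g (b i) (b i) * B ψ (ρ (ι Q (b i)) (ρ (ι Q v) φ))) • b i)
        + (g (b i) (b i) * B φ (ρ (ι Q (b i)) (ρ (ι Q v) ψ))) • b i
        = (2 * B φ ψ) • ((g (b i) (b i) * g v (b i)) • b i) := by
      intro i _
      rw [smul_smul, ← add_smul, smul_smul]
      congr 1
      have e1 : (-1 : k) ^ σ * (g (b i) (b i) * B ψ (ρ (ι Q (b i)) (ρ (ι Q v) φ)))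
          = g (b i) (b i) * B φ (ρ (ι Q v * ι Q (b i)) ψ) := by
        rw [mul_left_comm, hmove]
      rw [e1, ← hend (ι Q (b i)) (ι Q v), ← mul_add, ← map_add (B φ), ← LinearMap.add_apply, ← map_add,
        show ι Q v * ι Q (b i) + ι Q (b i) * ι Q v = algebraMap k _ (2 * g v (b i)) from
          hpolar v (b i), halg, map_smul, smul_eq_mul]
      ring
    rw [Finset.sum_congr rfl hterm, ← Finset.smul_sum, hv v]
  refine ⟨?_, part2⟩
  -- part (i)
  intro φ ψ v
  have hiv : ι Q v = ∑ j, (g (b j) (b j) * g v (b j)) • ι Q (b j) := by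
    conv_lhs => rw [← hv v]
    rw [map_sum]
    simp only [map_smul]
  -- clean up the factor 2 on the left
  rw [smul_mul_assoc, mul_smul_comm, ← smul_sub, smul_smul, mul_inv_cancel₀ h2, one_smul]
  rw [Finset.sum_mul, Finset.mul_sum, ← Finset.sum_sub_distrib]
  simp only [smul_mul_assoc, mul_smul_comm, ← smul_sub]
  simp only [hcomm]
  -- rewrite the right side
  simp only [map_sub, map_smul, map_sum]
  rw [Finset.smul_sum, ← Finset.sum_sub_distrib]
  have hRterm : ∀ i ∈ Finset.univ,
      (-1 : k) ^ σ • ((g (b i) (b i) * B ψ (ρ (ι Q (b i)) (ρ (ι Q v) φ))) • ι Q (b i))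
        - (g (b i) (b i) * B φ (ρ (ι Q (b i)) (ρ (ι Q v) ψ))) • ι Q (b i)
      = ∑ j, (g (b i) (b i) * ((g (b j) (b j) * g v (b j))
          * B φ (ρ (ι Q (b j) * ι Q (b i) - ι Q (b i) * ι Q (b j)) ψ))) • ι Q (b i) := by
    intro i _
    rw [smul_smul, ← sub_smul]
    have e1 : (-1 : k) ^ σ * (g (b i) (b i) * B ψ (ρ (ι Q (b i)) (ρ (ι Q v) φ)))
        - g (b i) (b i) * B φ (ρ (ι Q (b i)) (ρ (ι Q v) ψ))
        = g (b i) (b i) * B φ (ρ (ι Q v * ι Q (b i) - ι Q (b i) * ι Q v) ψ) := by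
      rw [mul_left_comm, hmove, ← hend (ι Q (b i)) (ι Q v), ← mul_sub, ← map_sub (B φ),
        ← LinearMap.sub_apply, ← map_sub]
    rw [e1]
    have e2 : ι Q v * ι Q (b i) - ι Q (b i) * ι Q v
        = ∑ j, (g (b j) (b j) * g v (b j)) • (ι Q (b j) * ι Q (b i) - ι Q (b i) * ι Q (b j)) := by
      conv_lhs => rw [hiv]
      rw [Finset.sum_mul, Finset.mul_sum, ← Finset.sum_sub_distrib]
      simp only [smul_mul_assoc, mul_smul_comm, ← smul_sub]
    rw [e2, map_sum, LinearMap.sum_apply, map_sum]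
    simp only [map_smul, LinearMap.smul_apply, smul_eq_mul]
    rw [Finset.mul_sum, Finset.sum_smul]
  rw [Finset.sum_congr rfl hRterm, ← Finset.sum_product', Finset.univ_product_univ,
    ← Finset.sum_filter_add_sum_filter_not Finset.univ
      (fun p : Fin (2 * n) × Fin (2 * n) => p.1 < p.2)]
  -- the complement of the strict upper triangle reduces to the strict lower triangle
  have hdrop : ∑ p ∈ Finset.univ.filter
        (fun p : Fin (2 * n) × Fin (2 * n) => ¬ p.1 < p.2),
        (g (b p.1) (b p.1) * ((g (b p.2) (b p.2) * g v (b p.2))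
          * B φ (ρ (ι Q (b p.2) * ι Q (b p.1) - ι Q (b p.1) * ι Q (b p.2)) ψ))) • ι Q (b p.1)
      = ∑ p ∈ Finset.univ.filter
        (fun p : Fin (2 * n) × Fin (2 * n) => p.2 < p.1),
        (g (b p.1) (b p.1) * ((g (b p.2) (b p.2) * g v (b p.2))
          * B φ (ρ (ι Q (b p.2) * ι Q (b p.1) - ι Q (b p.1) * ι Q (b p.2)) ψ))) • ι Q (b p.1) := by
    refine (Finset.sum_subset ?_ ?_).symm
    · intro p hp
      simp only [Finset.mem_filter, Finset.mem_univ, true_and] at hp ⊢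
      exact not_lt.mpr (le_of_lt hp)
    · intro p hpt hp
      simp only [Finset.mem_filter, Finset.mem_univ, true_and, not_lt] at hpt hp
      have hpe : p.1 = p.2 := le_antisymm hp hpt
      rw [hpe, sub_self, map_zero, LinearMap.zero_apply, map_zero, mul_zero, mul_zero, zero_smul]
  rw [hdrop]
  have hswap : ∑ p ∈ Finset.univ.filter
        (fun p : Fin (2 * n) × Fin (2 * n) => p.2 < p.1),
        (g (b p.1) (b p.1) * ((g (b p.2) (b p.2) * g v (b p.2))
          * B φ (ρ (ι Q (b p.2) * ι Q (b p.1) - ι Q (b p.1) * ι Q (b p.2)) ψ))) • ι Q (b p.1)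
      = ∑ p ∈ Finset.univ.filter
        (fun p : Fin (2 * n) × Fin (2 * n) => p.1 < p.2),
        (g (b p.2) (b p.2) * ((g (b p.1) (b p.1) * g v (b p.1))
          * B φ (ρ (ι Q (b p.1) * ι Q (b p.2) - ι Q (b p.2) * ι Q (b p.1)) ψ))) • ι Q (b p.2) := by
    refine Finset.sum_nbij' (fun p => Prod.swap p) (fun p => Prod.swap p) ?_ ?_ ?_ ?_ ?_ <;>
      simp [Finset.mem_filter]
  rw [hswap, ← Finset.sum_add_distrib]
  refine Finset.sum_congr rfl ?_
  intro p hp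
  simp only [Finset.mem_filter, Finset.mem_univ, true_and] at hp
  have hne : p.1 ≠ p.2 := ne_of_lt hp
  have hEij : ι Q (b p.1) * ι Q (b p.2) = -(ι Q (b p.2) * ι Q (b p.1)) := hanti p.1 p.2 hne
  have hD1 : B φ (ρ (ι Q (b p.2) * ι Q (b p.1) - ι Q (b p.1) * ι Q (b p.2)) ψ)
      = 2 * B φ (ρ (ι Q (b p.2) * ι Q (b p.1)) ψ) := by
    rw [hEij, sub_neg_eq_add, map_add, LinearMap.add_apply, map_add]
    ring
  have hD2 : B φ (ρ (ι Q (b p.1) * ι Q (b p.2) - ι Q (b p.2) * ι Q (b p.1)) ψ)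
      = -(2 * B φ (ρ (ι Q (b p.2) * ι Q (b p.1)) ψ)) := by
    rw [hEij, sub_eq_add_neg, ← neg_add, map_neg, LinearMap.neg_apply, map_neg,
      map_add, LinearMap.add_apply, map_add]
    ring
  rw [hD1, hD2, smul_sub, smul_smul, smul_smul, sub_eq_add_neg, ← neg_smul]
  congr 1
  · congr 1
    rw [hsymm (b p.2) v]
    ring
  · congr 1
    rw [hsymm (b p.1) v]
    ring
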